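/- If (M, 𝒮; e_1, …, e_h) is an (a, q, h, d)-pyramid and h' is an integer with 0 ≤ h' ≤ h, then there is a restriction M' of M with r(M') = a + h' and a subcollection 𝒮' ⊆ 𝒮 such that (M', 𝒮'; e_1, …, e_{h'}) is an (a, q, h', d)-pyramid and ε_{M'}(𝒮') ≥ q^{h'}. -/

import Mathlib

open Set
open scoped Classical

namespace Matroid

variable {α β : Type*}

/-- The rank of a set `X` in a matroid `M`: the maximum size of an independent subset of `X`
(appropriate for finite matroids). -/
noncomputable def rk (M : Matroid α) (X : Set α) : ℕ :=
  sSup {n | ∃ I, I ⊆ X ∧ M.Indep I ∧ I.ncard = n}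

/-- The rank `r(M)` of a matroid `M`. -/
noncomputable def rank (M : Matroid α) : ℕ := M.rk M.E

/-- The deletion `M \ D` of a set `D` from `M`. -/
def deleteSet (M : Matroid α) (D : Set α) : Matroid α := M ↾ (M.E \ D)

/-- The contraction `M / C` of a set `C` in `M`, defined via duality. -/
def contractSet (M : Matroid α) (C : Set α) : Matroid α := (M✶.deleteSet C)✶

/-- `N` is a minor of `M`, i.e. `N = M / C \ D` for some sets `C` and `D`. -/
def IsMinorOf (N M : Matroid α) : Prop := ∃ C D : Set α, (M.contractSet C).deleteSet D = N

/-- An isomorphism between matroids, possibly on different ground types. -/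
def IsIso (M : Matroid α) (N : Matroid β) : Prop :=
  ∃ e : M.E ≃ N.E, ∀ I : Set M.E, M.Indep ((↑) '' I) ↔ N.Indep ((↑) '' (e '' I))

/-- `N` is isomorphic to the uniform matroid `U_{k,n}`: the ground set has `n` elements and
the independent sets are exactly the subsets with at most `k` elements. -/
def IsUnif (N : Matroid α) (k n : ℕ) : Prop :=
  N.E.Finite ∧ N.E.ncard = n ∧ ∀ I ⊆ N.E, (N.Indep I ↔ I.ncard ≤ k)

/-- `M` has a minor isomorphic to `U_{k,n}`. -/
def HasUnifMinor (M : Matroid α) (k n : ℕ) : Prop :=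
  ∃ N : Matroid α, N.IsMinorOf M ∧ N.IsUnif k n

/-- `τ_a(M)`: the minimum size of a collection of subsets of `E(M)`, each of rank at most `a`,
whose union is `E(M)`. -/
noncomputable def tau (M : Matroid α) (a : ℕ) : ℕ :=
  sInf {n | ∃ 𝒞 : Finset (Set α),
    𝒞.card = n ∧ (∀ X ∈ 𝒞, X ⊆ M.E ∧ M.rk X ≤ a) ∧ M.E ⊆ ⋃₀ ↑𝒞}

/-- `M` is `d`-thick: every collection of sets, each of rank less than `r(M)`, whose union
is `E(M)`, has at least `d` members. -/
def Thick (M : Matroid α) (d : ℕ) : Prop :=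
  ∀ 𝒞 : Finset (Set α), (∀ X ∈ 𝒞, X ⊆ M.E ∧ M.rk X < M.rank) → M.E ⊆ ⋃₀ ↑𝒞 → d ≤ 𝒞.card

/-- A set `X` is `d`-thick in `M` if the restriction `M|X` is `d`-thick. -/
def ThickIn (M : Matroid α) (d : ℕ) (X : Set α) : Prop := (M ↾ X).Thick d

/-- A collection of sets is simple in `M` if its members are pairwise dissimilar,
i.e. distinct members have distinct closures. -/
def SimpleColl (M : Matroid α) (𝒳 : Finset (Set α)) : Prop :=
  ∀ X ∈ 𝒳, ∀ Y ∈ 𝒳, M.closure X = M.closure Y → X = Y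

/-- `ε_M(𝒳)`: the maximum size of a subcollection of `𝒳` that is simple in `M`. -/
noncomputable def eps (M : Matroid α) (𝒳 : Finset (Set α)) : ℕ :=
  sSup {n | ∃ 𝒴 : Finset (Set α), 𝒴 ⊆ 𝒳 ∧ M.SimpleColl 𝒴 ∧ 𝒴.card = n}

/-- `𝒳` is `d`-firm in `M`: every subcollection `𝒳'` with `|𝒳'| > |𝒳|/d` has the same rank
as `𝒳`. -/
def Firm (M : Matroid α) (d : ℕ) (𝒳 : Finset (Set α)) : Prop :=
  ∀ 𝒳' ⊆ 𝒳, 𝒳.card < d * 𝒳'.card → M.rk (⋃₀ ↑𝒳') = M.rk (⋃₀ ↑𝒳)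

/-- `ℱ` is a cover of the collection `𝒳` in `M`: every member of `𝒳` is contained in a member
of `ℱ`. -/
def CoverOf (M : Matroid α) (ℱ 𝒳 : Finset (Set α)) : Prop :=
  (∀ F ∈ ℱ, F ⊆ M.E) ∧ ∀ X ∈ 𝒳, ∃ F ∈ ℱ, X ⊆ F

/-- `ℱ` is a cover of the matroid `M`: every element of `E(M)` lies in a member of `ℱ`. -/
def CoverOfGround (M : Matroid α) (ℱ : Finset (Set α)) : Prop :=
  (∀ F ∈ ℱ, F ⊆ M.E) ∧ M.E ⊆ ⋃₀ ↑ℱ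

/-- The weight `wt^d_M(ℱ) = Σ_{F ∈ ℱ} d^{r_M(F)}`. -/
noncomputable def wt (M : Matroid α) (d : ℕ) (ℱ : Finset (Set α)) : ℕ :=
  ∑ F ∈ ℱ, d ^ M.rk F

/-- `ℱ` is a `d`-minimal cover of the collection `𝒳` in `M`. -/
def MinimalCoverOf (M : Matroid α) (d : ℕ) (ℱ 𝒳 : Finset (Set α)) : Prop :=
  M.CoverOf ℱ 𝒳 ∧ ∀ ℱ' : Finset (Set α), M.CoverOf ℱ' 𝒳 → M.wt d ℱ ≤ M.wt d ℱ'

/-- `ℱ` is a `d`-minimal cover of the matroid `M`. -/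
def MinimalCoverOfGround (M : Matroid α) (d : ℕ) (ℱ : Finset (Set α)) : Prop :=
  M.CoverOfGround ℱ ∧ ∀ ℱ' : Finset (Set α), M.CoverOfGround ℱ' → M.wt d ℱ ≤ M.wt d ℱ'

/-- `τ^d(M)`: the minimum weight of a cover of `M`. -/
noncomputable def tauW (M : Matroid α) (d : ℕ) : ℕ :=
  sInf {n | ∃ ℱ : Finset (Set α), M.CoverOfGround ℱ ∧ M.wt d ℱ = n}

/-- `𝒳` is `d`-scattered in `M`: every member of `𝒳` is `d`-thick in `M`, and
`{cl_M(X) : X ∈ 𝒳}` is a `d`-minimal cover of `𝒳` in `M`. -/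
def Scattered (M : Matroid α) (d : ℕ) (𝒳 : Finset (Set α)) : Prop :=
  (∀ X ∈ 𝒳, M.ThickIn d X) ∧ M.MinimalCoverOf d (𝒳.image M.closure) 𝒳

/-- `(M, 𝒮; L)` is an `(a, q, h, d)`-pyramid, where `h = L.length` and `L` lists the
elements `e_1, …, e_h`. -/
def IsPyramid (M : Matroid α) (𝒮 : Finset (Set α)) (L : List α) (a q d : ℕ) : Prop :=
  L.Nodup ∧ M.Indep {x | x ∈ L} ∧
  𝒮.Nonempty ∧
  (∀ S ∈ 𝒮, S ⊆ M.E ∧ M.rk S = a) ∧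
  (∀ S ∈ 𝒮, M.rk (S ∪ {x | x ∈ L}) = M.rk S + M.rk {x | x ∈ L}) ∧
  (∀ i < L.length, ∀ S ∈ 𝒮, ∃ f : Fin q → Set α,
    (∀ j, f j ∈ 𝒮) ∧
    (∀ j k, j ≠ k →
      (M.contractSet {x | x ∈ L.take i}).closure (f j) ≠
        (M.contractSet {x | x ∈ L.take i}).closure (f k)) ∧
    (∀ j, (M.contractSet {x | x ∈ L.take (i+1)}).closure (f j) =
      (M.contractSet {x | x ∈ L.take (i+1)}).closure S)) ∧
  (∀ S ∈ 𝒮, M.ThickIn d S)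

/-- `M` is representable over the field `F`. -/
def RepresentableOver (M : Matroid α) (F : Type*) [Field F] : Prop :=
  ∃ (n : ℕ) (φ : α → (Fin n → F)),
    ∀ I ⊆ M.E, (M.Indep I ↔ LinearIndependent F (fun x : I => φ x))

end Matroid


namespace Matroid

section AuxLemmas

variable {α : Type*} {M : Matroid α} {X Y I J C R : Set α}

lemma aux_rk_bddAbove (hM : M.Finite) (X : Set α) :
    BddAbove {n | ∃ I, I ⊆ X ∧ M.Indep I ∧ I.ncard = n} := by
  refine ⟨M.E.ncard, fun n hn => ?_⟩
  obtain ⟨I, -, hI, rfl⟩ := hn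
  exact Set.ncard_le_ncard hI.subset_ground hM.ground_finite

lemma aux_le_rk (hM : M.Finite) (hIX : I ⊆ X) (hI : M.Indep I) : I.ncard ≤ M.rk X :=
  le_csSup (aux_rk_bddAbove hM X) ⟨I, hIX, hI, rfl⟩

lemma aux_rk_le {m : ℕ} (h : ∀ I, I ⊆ X → M.Indep I → I.ncard ≤ m) : M.rk X ≤ m := by
  refine csSup_le ⟨0, ∅, empty_subset X, M.empty_indep, Set.ncard_empty α⟩ ?_
  rintro n ⟨I, hIX, hI, rfl⟩; exact h I hIX hI

lemma aux_basis'_rk (hM : M.Finite) (hI : M.IsBasis' I X) : M.rk X = I.ncard := by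
  refine le_antisymm (aux_rk_le fun J hJX hJ => ?_) (aux_le_rk hM hI.subset hI.indep)
  obtain ⟨K, hK, hJK⟩ := hJ.subset_isBasis'_of_subset hJX
  have hKI : K.ncard = I.ncard := by
    rw [Set.ncard_def, Set.ncard_def, hK.encard_eq_encard hI]
  exact (Set.ncard_le_ncard hJK (hM.ground_finite.subset hK.indep.subset_ground)).trans hKI.le

lemma aux_indep_rk (hM : M.Finite) (hI : M.Indep I) : M.rk I = I.ncard :=
  aux_basis'_rk hM hI.isBasis_self.isBasis'

lemma aux_rk_le_ncard (hX : X.Finite) : M.rk X ≤ X.ncard :=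
  aux_rk_le fun _ hIX _ => Set.ncard_le_ncard hIX hX

lemma aux_rk_union_le (hM : M.Finite) (X Y : Set α) : M.rk (X ∪ Y) ≤ M.rk X + M.rk Y := by
  refine aux_rk_le fun I hIXY hI => ?_
  have hfin : I.Finite := hM.ground_finite.subset hI.subset_ground
  have h1 : (I ∩ X).ncard ≤ M.rk X := aux_le_rk hM inter_subset_right (hI.inter_right X)
  have h2 : (I \ X).ncard ≤ M.rk Y :=
    aux_le_rk hM (fun x hx => (hIXY hx.1).resolve_left hx.2) (hI.subset diff_subset)
  calc I.ncard = (I ∩ X).ncard + (I \ X).ncard :=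
        (Set.ncard_inter_add_ncard_diff_eq_ncard I X hfin).symm
    _ ≤ _ := add_le_add h1 h2

lemma aux_rk_closure (hM : M.Finite) (X : Set α) : M.rk (M.closure X) = M.rk X := by
  obtain ⟨I, hI⟩ := M.exists_isBasis' X
  rw [aux_basis'_rk hM hI, ← aux_basis'_rk hM hI.isBasis_closure_right.isBasis']

lemma aux_rk_restrict (hXR : X ⊆ R) : (M ↾ R).rk X = M.rk X := by
  unfold rk
  congr 1
  ext n
  simp only [mem_setOf_eq, restrict_indep_iff]
  exact ⟨fun ⟨I, h1, h2, h3⟩ => ⟨I, h1, h2.1, h3⟩,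
    fun ⟨I, h1, h2, h3⟩ => ⟨I, h1, ⟨h2, h1.trans hXR⟩, h3⟩⟩

lemma aux_restrict_closure (hXR : X ⊆ R) (hR : R ⊆ M.E) :
    (M ↾ R).closure X = M.closure X ∩ R := by
  obtain ⟨I, hI⟩ := M.exists_isBasis X (hXR.trans hR)
  have hIR : (M ↾ R).IsBasis I X := hI.isBasis_restrict_of_subset hXR
  rw [← hIR.closure_eq_closure, ← hI.closure_eq_closure]
  have hIi : (M ↾ R).Indep I := by
    rw [restrict_indep_iff]; exact ⟨hI.indep, hI.subset.trans hXR⟩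
  ext e
  rw [mem_inter_iff, hIi.mem_closure_iff', hI.indep.mem_closure_iff', restrict_ground_eq]
  constructor
  · rintro ⟨heR, h⟩
    exact ⟨⟨hR heR, fun hin => h ⟨hin, insert_subset heR (hI.subset.trans hXR)⟩⟩, heR⟩
  · rintro ⟨⟨heE, h⟩, heR⟩
    exact ⟨heR, fun hin => h hin.of_restrict⟩

lemma aux_contract_ground (M : Matroid α) (C : Set α) : (M.contractSet C).E = M.E \ C := rfl

lemma aux_contract_indep_iff (hC : M.Indep C) :
    (M.contractSet C).Indep J ↔ Disjoint J C ∧ M.Indep (J ∪ C) := by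
  have hCE := hC.subset_ground
  rw [Matroid.contractSet, Matroid.deleteSet, dual_ground, dual_indep_iff_exists']
  simp only [restrict_ground_eq]
  constructor
  · rintro ⟨hJE, B, hB, hJB⟩
    rw [isBase_restrict_iff'] at hB
    have hBb : M✶.IsBasis B (M.E \ C) := (isBasis'_iff_isBasis diff_subset).1 hB
    obtain ⟨B₁, hB₁, hBB₁⟩ := hBb.indep.exists_isBase_superset
    have hB₁i : B = B₁ ∩ (M.E \ C) :=
      hBb.eq_of_subset_indep (hB₁.indep.inter_right _) (subset_inter hBB₁ hBb.subset)
        inter_subset_right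
    have hB₀ : M.IsBase (M.E \ B₁) := hB₁.compl_isBase_of_dual
    have hB₁E : B₁ ⊆ M.E := hB₁.subset_ground
    have hbasisC : M.IsBasis ((M.E \ B₁) ∩ C) C := by
      refine (hB₀.inter_isBasis_iff_compl_inter_isBasis_dual hCE).2 ?_
      rw [diff_diff_cancel_left hB₁E, ← hB₁i]
      exact hBb
    have hCB₀ : C ⊆ M.E \ B₁ := by
      have h := hC.eq_of_isBasis hbasisC
      rw [← h]; exact inter_subset_left
    have hJB₀ : J ⊆ M.E \ B₁ := by
      intro x hx
      refine ⟨(hJE hx).1, fun hxB₁ => ?_⟩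
      exact Set.disjoint_left.mp hJB hx (hB₁i ▸ ⟨hxB₁, hJE hx⟩)
    exact ⟨(subset_diff.1 hJE).2, hB₀.indep.subset (union_subset hJB₀ hCB₀)⟩
  · rintro ⟨hJC, hJCi⟩
    have hJE : J ⊆ M.E := (hJCi.subset subset_union_left).subset_ground
    obtain ⟨B₀, hB₀, hsub⟩ := hJCi.exists_isBase_superset
    have hCB₀ : C ⊆ B₀ := subset_union_right.trans hsub
    have hbC : M.IsBasis (B₀ ∩ C) C := by
      rw [inter_eq_self_of_subset_right hCB₀]; exact hC.isBasis_self
    have hdualB := (hB₀.inter_isBasis_iff_compl_inter_isBasis_dual hCE).1 hbC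
    refine ⟨subset_diff.2 ⟨hJE, hJC⟩, (M.E \ B₀) ∩ (M.E \ C), ?_, ?_⟩
    · rw [isBase_restrict_iff']
      exact hdualB.isBasis'
    · exact Set.disjoint_left.2 fun x hxJ hxB => hxB.1.2 (hsub (Or.inl hxJ))

lemma aux_contract_closure (hC : M.Indep C) (hX : X ⊆ M.E) :
    (M.contractSet C).closure X = M.closure (X ∪ C) \ C := by
  obtain ⟨I, hI, hCI⟩ := hC.subset_isBasis'_of_subset (subset_union_right : C ⊆ X ∪ C)
  set N := M.contractSet C with hN
  have hNE : N.E = M.E \ C := rfl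
  have hJind : N.Indep (I \ C) := by
    rw [hN, aux_contract_indep_iff hC]
    refine ⟨disjoint_sdiff_left, ?_⟩
    rw [diff_union_of_subset hCI]
    exact hI.indep
  have hJX : N.IsBasis' (I \ C) (X \ C) := by
    constructor
    · exact ⟨hJind, fun x hx => ⟨(hI.subset hx.1).resolve_right hx.2, hx.2⟩⟩
    · rintro K ⟨hKi, hKX⟩ hJK
      rw [hN, aux_contract_indep_iff hC] at hKi
      have hKCI : K ∪ C ⊆ I := by
        rw [hI.eq_of_subset_indep hKi.2 ?_ ?_]
        · rw [← diff_union_of_subset hCI]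
          exact union_subset_union_left C hJK
        · exact union_subset ((hKX.trans diff_subset).trans subset_union_left) subset_union_right
      intro x hxK
      exact ⟨hKCI (Or.inl hxK), Set.disjoint_left.mp hKi.1 hxK⟩
  have h0 : N.closure X = N.closure (X \ C) := by
    have hXC : X ∩ N.E = X \ C := by
      rw [hNE]
      ext x; exact ⟨fun h => ⟨h.1, h.2.2⟩, fun h => ⟨h.1, hX h.1, h.2⟩⟩
    rw [← N.closure_inter_ground X, hXC]
  rw [h0, ← hJX.closure_eq_closure, ← hI.closure_eq_closure]
  ext x
  rw [mem_diff, hJind.mem_closure_iff', hI.indep.mem_closure_iff', hNE, mem_diff]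
  constructor
  · rintro ⟨⟨hxE, hxC⟩, h⟩
    refine ⟨⟨hxE, fun hins => ?_⟩, hxC⟩
    have hNi : N.Indep (insert x (I \ C)) := by
      rw [hN, aux_contract_indep_iff hC]
      refine ⟨Set.disjoint_left.2 fun y hy hyC => ?_, ?_⟩
      · rcases hy with rfl | hy
        exacts [hxC hyC, hy.2 hyC]
      · rw [insert_union, diff_union_of_subset hCI]
        exact hins
    exact (h hNi).1
  · rintro ⟨⟨hxE, h⟩, hxC⟩
    refine ⟨⟨hxE, hxC⟩, fun hins => ?_⟩
    rw [hN, aux_contract_indep_iff hC, insert_union, diff_union_of_subset hCI] at hins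
    exact ⟨h hins.2, hxC⟩

lemma aux_contract_congr_iff (hC : M.Indep C) (hX : X ⊆ M.E) (hY : Y ⊆ M.E) :
    (M.contractSet C).closure X = (M.contractSet C).closure Y ↔
      M.closure (X ∪ C) = M.closure (Y ∪ C) := by
  rw [aux_contract_closure hC hX, aux_contract_closure hC hY]
  have hXC : C ⊆ M.closure (X ∪ C) :=
    M.subset_closure_of_subset' subset_union_right hC.subset_ground
  have hYC : C ⊆ M.closure (Y ∪ C) :=
    M.subset_closure_of_subset' subset_union_right hC.subset_ground
  constructor
  · intro h
    rw [← diff_union_of_subset hXC, ← diff_union_of_subset hYC, h]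
  · intro h; rw [h]

lemma aux_closure_union_congr (h : M.closure X = M.closure Y) (Z : Set α) :
    M.closure (X ∪ Z) = M.closure (Y ∪ Z) := by
  rw [← M.closure_union_closure_left_eq, h, M.closure_union_closure_left_eq]

lemma aux_closure_union_mono (h : M.closure (X ∪ C) = M.closure (Y ∪ C)) (hCR : C ⊆ R) :
    M.closure (X ∪ R) = M.closure (Y ∪ R) := by
  have hX : X ∪ R = (X ∪ C) ∪ R := by rw [union_assoc, union_eq_self_of_subset_left hCR]
  have hY : Y ∪ R = (Y ∪ C) ∪ R := by rw [union_assoc, union_eq_self_of_subset_left hCR]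
  rw [hX, hY, aux_closure_union_congr h R]

lemma aux_take_mono (L : List α) {m k : ℕ} (h : m ≤ k) :
    {x | x ∈ L.take m} ⊆ {x | x ∈ L.take k} := by
  intro x hx
  have he : L.take m = (L.take k).take m := by rw [List.take_take, min_eq_left h]
  simp only [mem_setOf_eq] at hx ⊢
  rw [he] at hx
  exact List.take_subset m (L.take k) hx

lemma aux_ncard_list {l : List α} (h : l.Nodup) : {x | x ∈ l}.ncard = l.length := by
  classical
  have he : {x | x ∈ l} = ↑l.toFinset := by ext x; simp
  rw [he, Set.ncard_coe_finset, List.toFinset_card_of_nodup h]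

lemma aux_tree (M : Matroid α) (𝒮 : Finset (Set α)) (L : List α) (q : ℕ)
    (hLi : M.Indep {x | x ∈ L})
    (hSE : ∀ S ∈ 𝒮, S ⊆ M.E)
    (hbr : ∀ i < L.length, ∀ S ∈ 𝒮, ∃ f : Fin q → Set α,
      (∀ j, f j ∈ 𝒮) ∧
      (∀ j k, j ≠ k →
        (M.contractSet {x | x ∈ L.take i}).closure (f j) ≠
          (M.contractSet {x | x ∈ L.take i}).closure (f k)) ∧
      (∀ j, (M.contractSet {x | x ∈ L.take (i+1)}).closure (f j) =
        (M.contractSet {x | x ∈ L.take (i+1)}).closure S)) :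
    ∀ n, n ≤ L.length → ∀ S ∈ 𝒮, ∃ g : (Fin n → Fin q) → Set α,
      (∀ v, g v ∈ 𝒮) ∧
      (∀ v, M.closure (g v ∪ {x | x ∈ L.take n}) = M.closure (S ∪ {x | x ∈ L.take n})) ∧
      (∀ v w, v ≠ w → M.closure (g v) ≠ M.closure (g w)) := by
  intro n
  induction n with
  | zero =>
    intro _ S hS
    exact ⟨fun _ => S, fun _ => hS, fun _ => rfl,
      fun v w hvw => absurd (funext fun i => i.elim0) hvw⟩
  | succ n ih =>
    intro hn S hS
    have hCn : M.Indep {x | x ∈ L.take n} :=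
      hLi.subset fun x hx => List.take_subset n L hx
    have hCn1 : M.Indep {x | x ∈ L.take (n+1)} :=
      hLi.subset fun x hx => List.take_subset (n+1) L hx
    obtain ⟨f, hf1, hf2, hf3⟩ := hbr n (by omega) S hS
    have hf2' : ∀ j k, j ≠ k →
        M.closure (f j ∪ {x | x ∈ L.take n}) ≠ M.closure (f k ∪ {x | x ∈ L.take n}) := by
      intro j k hjk heq
      exact hf2 j k hjk ((aux_contract_congr_iff hCn (hSE _ (hf1 j)) (hSE _ (hf1 k))).2 heq)
    have hf3' : ∀ j, M.closure (f j ∪ {x | x ∈ L.take (n+1)})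
        = M.closure (S ∪ {x | x ∈ L.take (n+1)}) :=
      fun j => (aux_contract_congr_iff hCn1 (hSE _ (hf1 j)) (hSE _ hS)).1 (hf3 j)
    choose g hg1 hg2 hg3 using fun j => ih (by omega) (f j) (hf1 j)
    have htake : {x | x ∈ L.take n} ⊆ {x | x ∈ L.take (n+1)} := aux_take_mono L (by omega)
    refine ⟨fun v => g (v 0) (fun i => v i.succ), fun v => hg1 _ _, fun v => ?_,
      fun v w hvw => ?_⟩
    · exact (aux_closure_union_mono (hg2 (v 0) (fun i => v i.succ)) htake).trans (hf3' (v 0))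
    · by_cases h0 : v 0 = w 0
      · have htail : (fun i => v i.succ) ≠ (fun i : Fin n => w i.succ) := by
          intro hcon
          apply hvw
          funext i
          refine Fin.cases ?_ ?_ i
          · exact h0
          · exact fun j => congrFun hcon j
        show M.closure (g (v 0) fun i => v i.succ) ≠ M.closure (g (w 0) fun i => w i.succ)
        rw [h0]
        exact hg3 (w 0) _ _ htail
      · intro heq
        have h1 := aux_closure_union_congr heq {x | x ∈ L.take n}
        rw [hg2 (v 0) _, hg2 (w 0) _] at h1
        exact hf2' _ _ h0 h1

end AuxLemmas

end Matroid

namespace Matroid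

/-- If `(M, 𝒮; e_1, …, e_h)` is an `(a,q,h,d)`-pyramid and `0 ≤ h' ≤ h`,
then there are a restriction `M'` of `M` with `r(M') = a + h'` and a subcollection `𝒮' ⊆ 𝒮`
such that `(M', 𝒮'; e_1, …, e_{h'})` is an `(a,q,h',d)`-pyramid and `ε_{M'}(𝒮') ≥ q^{h'}`. -/
theorem statement19 {α : Type*} (a q d : ℕ) (ha : 1 ≤ a) (hq : 1 ≤ q) (hd : 1 ≤ d)
    (M : Matroid α) (hM : M.Finite) (𝒮 : Finset (Set α)) (L : List α)
    (hP : M.IsPyramid 𝒮 L a q d) (h' : ℕ) (hh' : h' ≤ L.length) :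
    ∃ (M' : Matroid α) (𝒮' : Finset (Set α)),
      M'.IsRestriction M ∧ M'.rank = a + h' ∧ 𝒮' ⊆ 𝒮 ∧
      M'.IsPyramid 𝒮' (L.take h') a q d ∧ q ^ h' ≤ M'.eps 𝒮' := by
  classical
  obtain ⟨hnd, hindL, hne, hSE, hskew, hbr, hthick⟩ := hP
  set C : Set α := {x | x ∈ L.take h'} with hCdef
  have hCL : C ⊆ {x | x ∈ L} := fun x hx => List.take_subset h' L hx
  have hCind : M.Indep C := hindL.subset hCL
  have hCE : C ⊆ M.E := hCind.subset_ground
  obtain ⟨S₀, hS₀⟩ := hne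
  set F : Set α := M.closure (S₀ ∪ C) with hF
  have hFE : F ⊆ M.E := M.closure_subset_ground _
  have hclF : M.closure F = F := M.closure_closure _
  have hrkC : M.rk C = h' := by
    rw [aux_indep_rk hM hCind, hCdef, aux_ncard_list (hnd.sublist (L.take_sublist h')),
      List.length_take, min_eq_left hh']
  have hrkL : M.rk {x | x ∈ L} = L.length := by
    rw [aux_indep_rk hM hindL, aux_ncard_list hnd]
  have hrkSC : ∀ S ∈ 𝒮, M.rk (S ∪ C) = a + h' := by
    intro S hS
    have h1 : M.rk (S ∪ C) ≤ a + h' := by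
      have h := aux_rk_union_le hM S C
      rw [(hSE S hS).2, hrkC] at h
      exact h
    have h2 : a + h' ≤ M.rk (S ∪ C) := by
      have hsplit : S ∪ {x | x ∈ L} = (S ∪ C) ∪ {x | x ∈ L.drop h'} := by
        rw [union_assoc]
        congr 1
        ext x
        simp only [hCdef, mem_setOf_eq, mem_union]
        rw [← List.mem_append, List.take_append_drop]
      have hd : M.rk {x | x ∈ L.drop h'} ≤ L.length - h' := by
        refine (aux_rk_le_ncard (L.drop h').finite_toSet).trans ?_
        have he : {x | x ∈ L.drop h'}.ncard = (L.drop h').toFinset.card := by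
          rw [← Set.ncard_coe_finset]; congr 1; ext x; simp
        rw [he]
        exact (L.drop h').toFinset_card_le.trans (by rw [List.length_drop])
      have h3 := aux_rk_union_le hM (S ∪ C) {x | x ∈ L.drop h'}
      rw [← hsplit, hskew S hS, (hSE S hS).2, hrkL] at h3
      omega
    omega
  set 𝒮' : Finset (Set α) := 𝒮.filter (fun S => M.closure (S ∪ C) = F) with h𝒮'
  have hsub𝒮 : 𝒮' ⊆ 𝒮 := Finset.filter_subset _ _
  have hmem' : ∀ S ∈ 𝒮', S ∈ 𝒮 ∧ M.closure (S ∪ C) = F := fun S hS => Finset.mem_filter.1 hS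
  have hS₀' : S₀ ∈ 𝒮' := Finset.mem_filter.2 ⟨hS₀, rfl⟩
  have hSF : ∀ S ∈ 𝒮', S ⊆ F := by
    intro S hS
    have h := (hmem' S hS).2
    rw [← h]
    exact M.subset_closure_of_subset' subset_union_left (hSE S (hmem' S hS).1).1
  have hCF : C ⊆ F := M.subset_closure_of_subset' subset_union_right hCE
  set M' : Matroid α := M ↾ F with hM'
  have hclM' : ∀ X, X ⊆ F → M'.closure X = M.closure X := by
    intro X hXF
    rw [hM', aux_restrict_closure hXF hFE, inter_eq_self_of_subset_left]
    exact (M.closure_subset_closure hXF).trans hclF.subset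
  have hconM' : ∀ i, i ≤ h' → ∀ X, X ⊆ F →
      (M'.contractSet {x | x ∈ L.take i}).closure X
        = (M.contractSet {x | x ∈ L.take i}).closure X := by
    intro i hi X hXF
    have hCiC : {x | x ∈ L.take i} ⊆ C := aux_take_mono L hi
    have hCiF : {x | x ∈ L.take i} ⊆ F := hCiC.trans hCF
    have hCii : M.Indep {x | x ∈ L.take i} := hCind.subset hCiC
    have hCii' : M'.Indep {x | x ∈ L.take i} := by
      rw [hM', restrict_indep_iff]; exact ⟨hCii, hCiF⟩
    rw [aux_contract_closure hCii' (show X ⊆ M'.E from hXF),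
      aux_contract_closure hCii (hXF.trans hFE), hclM' _ (union_subset hXF hCiF)]
  refine ⟨M', 𝒮', M.restrict_isRestriction F hFE, ?_, hsub𝒮, ?_, ?_⟩
  · show M'.rk M'.E = a + h'
    rw [hM', restrict_ground_eq, aux_rk_restrict Subset.rfl, hF, aux_rk_closure hM,
      hrkSC S₀ hS₀]
  · have hndtake : (L.take h').Nodup := hnd.sublist (L.take_sublist h')
    refine ⟨hndtake, ?_, ⟨S₀, hS₀'⟩, ?_, ?_, ?_, ?_⟩
    · rw [← hCdef, hM', restrict_indep_iff]
      exact ⟨hCind, hCF⟩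
    · intro S hS
      refine ⟨hSF S hS, ?_⟩
      rw [hM', aux_rk_restrict (hSF S hS), (hSE S (hmem' S hS).1).2]
    · intro S hS
      rw [← hCdef, hM', aux_rk_restrict (union_subset (hSF S hS) hCF),
        aux_rk_restrict (hSF S hS), aux_rk_restrict hCF, hrkSC S (hmem' S hS).1,
        (hSE S (hmem' S hS).1).2, hrkC]
    · intro i hi S hS
      have hih' : i < h' := by
        rw [List.length_take] at hi
        omega
      obtain ⟨f, hf1, hf2, hf3⟩ := hbr i (lt_of_lt_of_le hih' hh') S (hsub𝒮 hS)
      have hf𝒮' : ∀ j, f j ∈ 𝒮' := by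
        intro j
        refine Finset.mem_filter.2 ⟨hf1 j, ?_⟩
        have hCi1 : M.Indep {x | x ∈ L.take (i+1)} :=
          hCind.subset (aux_take_mono L (by omega))
        have hsim := (aux_contract_congr_iff hCi1
          (hSE _ (hf1 j)).1 (hSE _ (hsub𝒮 hS)).1).1 (hf3 j)
        have hmono := aux_closure_union_mono hsim
          (show {x | x ∈ L.take (i+1)} ⊆ C from aux_take_mono L (by omega))
        rw [hmono, (hmem' S hS).2]
      refine ⟨f, hf𝒮', ?_, ?_⟩
      · intro j k hjk
        have htt : (L.take h').take i = L.take i := by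
          rw [List.take_take, min_eq_left hih'.le]
        rw [htt, hconM' i hih'.le (f j) (hSF _ (hf𝒮' j)),
          hconM' i hih'.le (f k) (hSF _ (hf𝒮' k))]
        exact hf2 j k hjk
      · intro j
        have htt : (L.take h').take (i+1) = L.take (i+1) := by
          rw [List.take_take, min_eq_left (by omega)]
        rw [htt, hconM' (i+1) (by omega) (f j) (hSF _ (hf𝒮' j)),
          hconM' (i+1) (by omega) S (hSF S hS)]
        exact hf3 j
    · intro S hS
      show (M' ↾ S).Thick d
      rw [hM', M.restrict_restrict_eq (hSF S hS)]
      exact hthick S (hsub𝒮 hS)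
  · obtain ⟨g, hg1, hg2, hg3⟩ :=
      aux_tree M 𝒮 L q hindL (fun S hS => (hSE S hS).1) hbr h' hh' S₀ hS₀
    have hg𝒮' : ∀ v, g v ∈ 𝒮' := by
      intro v
      refine Finset.mem_filter.2 ⟨hg1 v, ?_⟩
      rw [hF]
      exact hg2 v
    set 𝒴 : Finset (Set α) := Finset.image g Finset.univ with h𝒴
    have hginj : Function.Injective g := by
      intro v w hvw
      by_contra hne
      exact hg3 v w hne (by rw [hvw])
    have hcard : 𝒴.card = q ^ h' := by
      rw [h𝒴, Finset.card_image_of_injective _ hginj, Finset.card_univ]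
      simp
    have h𝒴sub : 𝒴 ⊆ 𝒮' := by
      intro X hX
      obtain ⟨v, -, rfl⟩ := Finset.mem_image.1 hX
      exact hg𝒮' v
    have hsimple : M'.SimpleColl 𝒴 := by
      intro X hX Y hY hXY
      obtain ⟨v, -, rfl⟩ := Finset.mem_image.1 hX
      obtain ⟨w, -, rfl⟩ := Finset.mem_image.1 hY
      rw [hclM' _ (hSF _ (hg𝒮' v)), hclM' _ (hSF _ (hg𝒮' w))] at hXY
      by_contra hne
      exact hg3 v w (fun h => hne (congrArg g h)) hXY
    show q ^ h' ≤ sSup {n | ∃ 𝒴 : Finset (Set α), 𝒴 ⊆ 𝒮' ∧ M'.SimpleColl 𝒴 ∧ 𝒴.card = n}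
    refine le_csSup ⟨𝒮'.card, ?_⟩ ⟨𝒴, h𝒴sub, hsimple, hcard⟩
    rintro n ⟨𝒵, h1, -, rfl⟩
    exact Finset.card_le_card h1


end Matroid
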